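/- Let R be a commutative ring. The assignments T ↦ X = ⋃{V(I) : I an ideal of R with R/I ∈ T} and X ↦ T = {M an R-module : Supp(M) ⊆ X} are mutually inverse bijections between hereditary torsion pairs of finite type (T,F) in Mod-R and Thomason subsets X of Spec(R). In particular, for every Thomason subset X the class {M : Supp(M) ⊆ X} is the torsion class of a hereditary torsion pair of finite type, and for every hereditary torsion pair of finite type (T,F) the set ⋃{V(I) : R/I ∈ T} is Thomason and T = {M : Supp(M) ⊆ ⋃{V(I) : R/I ∈ T}}. -/

import Mathlib

open CategoryTheory
universe u

/-- A subset of `Spec A` is Thomason if it is a union of the zero loci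
of a set of finitely generated ideals. -/
def IsThomason {A : Type*} [CommRing A] (X : Set (PrimeSpectrum A)) : Prop :=
  ∃ 𝓘 : Set (Ideal A), (∀ I ∈ 𝓘, I.FG) ∧
    X = ⋃ I ∈ 𝓘, PrimeSpectrum.zeroLocus (I : Set A)

variable {R : Type u} [CommRing R]

/-- A torsion pair `(T, F)` in `Mod-R`: `T` is exactly the class of modules with no
nonzero maps into members of `F`, and `F` is exactly the class of modules receiving
no nonzero maps from members of `T`. -/
structure IsTorsionPair (T F : Set (ModuleCat.{u} R)) : Prop where
  mem_torsion_iff : ∀ M : ModuleCat.{u} R, M ∈ T ↔ ∀ N ∈ F, ∀ f : M ⟶ N, f = 0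
  mem_torsionFree_iff : ∀ N : ModuleCat.{u} R, N ∈ F ↔ ∀ M ∈ T, ∀ f : M ⟶ N, f = 0

/-- A class of modules is hereditary (closed under submodules). -/
def HereditaryClass (T : Set (ModuleCat.{u} R)) : Prop :=
  ∀ M : ModuleCat.{u} R, M ∈ T → ∀ S : Submodule R M, ModuleCat.of R S ∈ T

/-- A class of modules is closed under direct limits (directed colimits). -/
def ClosedUnderDirectedColimits (F : Set (ModuleCat.{u} R)) : Prop :=
  ∀ (ι : Type u) [Preorder ι] [IsDirected ι (· ≤ ·)] [Nonempty ι]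
    (D : ι ⥤ ModuleCat.{u} R) (c : Limits.Cocone D), Limits.IsColimit c →
    (∀ i, D.obj i ∈ F) → c.pt ∈ F

/-- The class of modules supported on `X`. -/
def torsionOfSet (X : Set (PrimeSpectrum R)) : Set (ModuleCat.{u} R) :=
  {M | Module.support R M ⊆ X}

/-- The torsion-free class associated to a torsion class. -/
def freeOf (T : Set (ModuleCat.{u} R)) : Set (ModuleCat.{u} R) :=
  {N | ∀ M ∈ T, ∀ f : M ⟶ N, f = 0}

/-- The subset `⋃ {V(I) : R/I ∈ T}` of `Spec R` associated to a torsion class. -/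
def thomasonOf (T : Set (ModuleCat.{u} R)) : Set (PrimeSpectrum R) :=
  ⋃ I ∈ {I : Ideal R | ModuleCat.of R (R ⧸ I) ∈ T}, PrimeSpectrum.zeroLocus (I : Set R)

open Limits PrimeSpectrum

lemma GP_mem_annOf {M : Type u} [AddCommGroup M] [Module R M] {m : M} {r : R} :
    r ∈ (Submodule.span R {m}).annihilator ↔ r • m = 0 :=
  Submodule.mem_annihilator_span_singleton m r

lemma GP_support_subset_iff {X : Set (PrimeSpectrum R)} (M : Type u) [AddCommGroup M]
    [Module R M] :
    Module.support R M ⊆ X ↔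
      ∀ m : M, zeroLocus ((Submodule.span R {m}).annihilator : Set R) ⊆ X := by
  constructor
  · intro h m p hp
    exact h (Module.mem_support_iff_exists_annihilator.2
      ⟨m, (SetLike.coe_subset_coe).1 ((mem_zeroLocus _ _).1 hp)⟩)
  · intro h p hp
    obtain ⟨m, hm⟩ := Module.mem_support_iff_exists_annihilator.1 hp
    exact h m ((mem_zeroLocus _ _).2 hm)

lemma GP_ann_le_map {M N : Type u} [AddCommGroup M] [Module R M] [AddCommGroup N] [Module R N]
    (f : M →ₗ[R] N) (m : M) :
    (Submodule.span R {m}).annihilator ≤ (Submodule.span R {f m}).annihilator := by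
  intro r hr
  rw [GP_mem_annOf] at hr ⊢
  rw [← map_smul, hr, map_zero]

lemma GP_prime_trick {p : PrimeSpectrum R} {I : Ideal R} (h : p ∉ zeroLocus (I : Set R)) :
    ∃ r ∈ I, r ∉ p.asIdeal := by
  rw [mem_zeroLocus, Set.not_subset] at h
  obtain ⟨r, hr, hr'⟩ := h
  exact ⟨r, hr, hr'⟩

lemma GP_listProd_fg {L : List (Ideal R)} (h : ∀ I ∈ L, I.FG) : L.prod.FG := by
  induction L with
  | nil => exact ⟨{1}, by simp [Ideal.one_eq_top]⟩
  | cons I L ih =>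
      rw [List.prod_cons]
      exact Submodule.FG.mul (h I (List.mem_cons_self)) (ih fun J hJ => h J (List.mem_cons_of_mem _ hJ))

/-- Patch-compactness by Zorn: if `V(J) ⊆ ⋃_{I ∈ 𝓘} V(I)` with all `I` f.g., then a finite
product of members of `𝓘` is contained in `√J`. -/
lemma GP_zorn (J : Ideal R) (𝓘 : Set (Ideal R)) (hfg : ∀ I ∈ 𝓘, I.FG)
    (hcov : zeroLocus (J : Set R) ⊆ ⋃ I ∈ 𝓘, zeroLocus (I : Set R)) :
    ∃ L : List (Ideal R), (∀ I ∈ L, I ∈ 𝓘) ∧ L.prod ≤ J.radical := by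
  by_contra hno
  push_neg at hno
  set S : Set (Ideal R) := {K | J ≤ K ∧ ∀ L : List (Ideal R), (∀ I ∈ L, I ∈ 𝓘) → ¬ L.prod ≤ K.radical} with hS
  have hJS : J ∈ S := ⟨le_rfl, fun L hL hle => (hno L hL) hle⟩
  obtain ⟨K, -, hKS, hKmax⟩ : ∃ K, J ≤ K ∧ Maximal (· ∈ S) K := by
    refine zorn_le_nonempty₀ S ?_ J hJS
    intro c hcS hchain y hyc
    refine ⟨sSup c, ⟨le_trans (hcS hyc).1 (le_sSup hyc), ?_⟩, fun z hz => le_sSup hz⟩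
    intro L hL hle
    obtain ⟨n, hn⟩ := Ideal.exists_pow_le_of_le_radical_of_fg hle (GP_listProd_fg (fun I hI => hfg I (hL I hI)))
    have hcomp : IsCompactElement (L.prod ^ n) := by
      rw [← Submodule.fg_iff_compact]
      exact Submodule.FG.pow (GP_listProd_fg (fun I hI => hfg I (hL I hI))) n
    obtain ⟨K', hK'c, hK'⟩ :=
      ((CompleteLattice.isCompactElement_iff_le_of_directed_sSup_le _ _).1 hcomp) c ⟨y, hyc⟩
        (hchain.directedOn) hn
    refine (hcS hK'c).2 L hL ?_
    intro x hx
    exact ⟨n, hK' (Ideal.pow_mem_pow hx n)⟩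
  have hKprime : K.IsPrime := by
    constructor
    · intro htop
      refine hKS.2 [] (by simp) ?_
      rw [List.prod_nil, htop, Ideal.radical_top, Ideal.one_eq_top]
    · intro a b hab
      by_contra hcon
      push_neg at hcon
      obtain ⟨ha, hb⟩ := hcon
      have key : ∀ x : R, x ∉ K → ∃ L : List (Ideal R), (∀ I ∈ L, I ∈ 𝓘) ∧
          L.prod ≤ (K ⊔ Ideal.span {x}).radical := by
        intro x hx
        by_contra hKx
        push_neg at hKx
        have hmem : K ⊔ Ideal.span {x} ∈ S :=
          ⟨le_trans hKS.1 le_sup_left, fun L hL => hKx L hL⟩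
        have : K ⊔ Ideal.span {x} ≤ K := hKmax hmem le_sup_left
        exact hx (this (Ideal.mem_sup_right (Ideal.mem_span_singleton_self x)))
      obtain ⟨La, hLa, hLa'⟩ := key a ha
      obtain ⟨Lb, hLb, hLb'⟩ := key b hb
      refine hKS.2 (La ++ Lb) (fun I hI => ((List.mem_append.1 hI).elim (hLa I) (hLb I))) ?_
      rw [List.prod_append]
      calc La.prod * Lb.prod
          ≤ (K ⊔ Ideal.span {a}).radical * (K ⊔ Ideal.span {b}).radical :=
            Ideal.mul_mono hLa' hLb'
        _ ≤ ((K ⊔ Ideal.span {a}) * (K ⊔ Ideal.span {b})).radical := by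
            rw [Ideal.radical_mul]; exact Ideal.mul_le_inf
        _ ≤ K.radical := by
            apply Ideal.radical_mono
            rw [Ideal.mul_le]
            intro r hr s hs
            obtain ⟨k1, hk1, x, hxs, rfl⟩ := Submodule.mem_sup.1 hr
            obtain ⟨k2, hk2, y, hys, rfl⟩ := Submodule.mem_sup.1 hs
            obtain ⟨c1, rfl⟩ := Ideal.mem_span_singleton'.1 hxs
            obtain ⟨c2, rfl⟩ := Ideal.mem_span_singleton'.1 hys
            have : (k1 + c1 * a) * (k2 + c2 * b)
                = k1 * (k2 + c2 * b) + (c1 * a) * k2 + (c1 * c2) * (a * b) := by ring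
            rw [this]
            exact K.add_mem (K.add_mem (K.mul_mem_right _ hk1) (K.mul_mem_left _ hk2))
              (K.mul_mem_left _ hab)
  have hKV : (⟨K, hKprime⟩ : PrimeSpectrum R) ∈ zeroLocus (J : Set R) :=
    (mem_zeroLocus _ _).2 hKS.1
  obtain ⟨U, hU⟩ := Set.mem_iUnion.1 (hcov hKV)
  obtain ⟨hU𝓘, hKU⟩ := Set.mem_iUnion.1 hU
  refine hKS.2 [U] (by simpa using hU𝓘) ?_
  rw [List.prod_singleton]
  exact le_trans ((mem_zeroLocus _ _).1 hKU) Ideal.le_radical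

lemma GP_memT_iff {X : Set (PrimeSpectrum R)} (M : ModuleCat.{u} R) :
    M ∈ torsionOfSet.{u} X ↔
      ∀ m : M, zeroLocus ((Submodule.span R {m}).annihilator : Set R) ⊆ X :=
  GP_support_subset_iff M

/-- The torsion submodule of elements supported in `X`. -/
def GP_tSet (X : Set (PrimeSpectrum R)) (M : ModuleCat.{u} R) : Submodule R M where
  carrier := {m | zeroLocus ((Submodule.span R {m}).annihilator : Set R) ⊆ X}
  zero_mem' := by
    intro p hp
    have h1 : (1 : R) ∈ (Submodule.span R {(0 : M)}).annihilator := GP_mem_annOf.2 (smul_zero 1)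
    exact absurd ((Ideal.eq_top_iff_one _).2 ((mem_zeroLocus _ _).1 hp h1))
      p.isPrime.ne_top
  add_mem' := by
    intro a b ha hb p hp
    by_cases hpa : p ∈ zeroLocus ((Submodule.span R {a}).annihilator : Set R)
    · exact ha hpa
    by_cases hpb : p ∈ zeroLocus ((Submodule.span R {b}).annihilator : Set R)
    · exact hb hpb
    obtain ⟨r, hr, hr'⟩ := GP_prime_trick hpa
    obtain ⟨s, hs, hs'⟩ := GP_prime_trick hpb
    rw [GP_mem_annOf] at hr hs
    have hrs : r * s ∈ (Submodule.span R {a + b}).annihilator := by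
      rw [GP_mem_annOf, smul_add]
      have h1 : (r * s) • a = 0 := by rw [mul_comm, mul_smul, hr, smul_zero]
      have h2 : (r * s) • b = 0 := by rw [mul_smul, hs, smul_zero]
      rw [h1, h2, add_zero]
    have : r * s ∈ p.asIdeal := (mem_zeroLocus _ _).1 hp hrs
    rcases p.isPrime.mem_or_mem this with h | h
    · exact absurd h hr'
    · exact absurd h hs'
  smul_mem' := by
    intro r a ha
    refine subset_trans (zeroLocus_anti_mono ?_) ha
    exact SetLike.coe_subset_coe.2 (GP_ann_le_map (LinearMap.lsmul R M r) a)

lemma GP_mem_tSet {X : Set (PrimeSpectrum R)} {M : ModuleCat.{u} R} {m : M} :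
    m ∈ GP_tSet X M ↔ zeroLocus ((Submodule.span R {m}).annihilator : Set R) ⊆ X := Iff.rfl

lemma GP_memF_iff {X : Set (PrimeSpectrum R)} (N : ModuleCat.{u} R) :
    N ∈ freeOf (torsionOfSet.{u} X) ↔
      ∀ n : N, zeroLocus ((Submodule.span R {n}).annihilator : Set R) ⊆ X → n = 0 := by
  constructor
  · intro h n hn
    set I := (Submodule.span R {n}).annihilator with hI
    have hT : ModuleCat.of R (R ⧸ I) ∈ torsionOfSet.{u} X := by
      rw [GP_memT_iff]
      intro m
      obtain ⟨r, rfl⟩ := Submodule.Quotient.mk_surjective _ m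
      refine subset_trans (zeroLocus_anti_mono (SetLike.coe_subset_coe.2 ?_)) hn
      intro s hs
      rw [GP_mem_annOf]
      have : s * r ∈ I := Ideal.mul_mem_right r I hs
      rw [← Submodule.Quotient.mk_smul, smul_eq_mul, Submodule.Quotient.mk_eq_zero]
      simpa [mul_comm] using this
    have hker : I ≤ LinearMap.ker (LinearMap.toSpanSingleton R N n) := by
      intro r hr
      rw [LinearMap.mem_ker, LinearMap.toSpanSingleton_apply]
      exact GP_mem_annOf.1 hr
    have h0 : Submodule.liftQ I (LinearMap.toSpanSingleton R N n) hker = 0 := congrArg ModuleCat.Hom.hom <| h (ModuleCat.of R (R ⧸ I)) hT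
      (ModuleCat.ofHom (Submodule.liftQ I (LinearMap.toSpanSingleton R N n) hker))
    have : n = Submodule.liftQ I (LinearMap.toSpanSingleton R N n) hker
        (Submodule.Quotient.mk 1) := by
      rw [Submodule.liftQ_apply, LinearMap.toSpanSingleton_apply, one_smul]
    rw [this, h0]
    rfl
  · intro h M hM f
    apply ModuleCat.hom_ext
    apply LinearMap.ext
    intro m
    have := (GP_memT_iff M).1 hM m
    exact h (f m) (subset_trans (zeroLocus_anti_mono
      (SetLike.coe_subset_coe.2 (GP_ann_le_map f.hom m))) this)

lemma GP_part1_tp (X : Set (PrimeSpectrum R)) :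
    IsTorsionPair (torsionOfSet.{u} X) (freeOf (torsionOfSet.{u} X)) := by
  constructor
  · intro M
    constructor
    · intro hM N hN f
      exact hN M hM f
    · intro h
      set t := GP_tSet X M with ht
      have hF : ModuleCat.of R (M ⧸ t) ∈ freeOf (torsionOfSet.{u} X) := by
        rw [GP_memF_iff]
        intro n hn
        obtain ⟨m, rfl⟩ := Submodule.Quotient.mk_surjective _ n
        rw [Submodule.Quotient.mk_eq_zero]
        rw [GP_mem_tSet]
        intro p hp
        by_contra hpX
        have hle : (Submodule.span R {Submodule.Quotient.mk (p := t) m}).annihilator ≤ p.asIdeal := by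
          intro r hr
          rw [GP_mem_annOf, ← Submodule.Quotient.mk_smul, Submodule.Quotient.mk_eq_zero] at hr
          by_contra hrp
          have hrm : zeroLocus ((Submodule.span R {r • m}).annihilator : Set R) ⊆ X := hr
          have hp' : p ∉ zeroLocus ((Submodule.span R {r • m}).annihilator : Set R) :=
            fun hc => hpX (hrm hc)
          obtain ⟨s, hs, hs'⟩ := GP_prime_trick hp'
          rw [GP_mem_annOf] at hs
          have : s * r ∈ (Submodule.span R {m}).annihilator := by
            rw [GP_mem_annOf, mul_smul]
            exact hs
          have := (mem_zeroLocus _ _).1 hp this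
          rcases p.isPrime.mem_or_mem this with hc | hc
          · exact hs' hc
          · exact hrp hc
        exact hpX (hn ((mem_zeroLocus _ _).2 hle))
      have h0 : t.mkQ = 0 := congrArg ModuleCat.Hom.hom <| h (ModuleCat.of R (M ⧸ t)) hF (ModuleCat.ofHom t.mkQ)
      rw [GP_memT_iff]
      intro m
      have : m ∈ t := by
        rw [← Submodule.Quotient.mk_eq_zero]
        have : t.mkQ m = Submodule.Quotient.mk m := rfl
        rw [← this, h0]
        rfl
      exact this
  · intro N
    exact Iff.rfl

lemma GP_part1_hered (X : Set (PrimeSpectrum R)) :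
    ∀ M : ModuleCat.{u} R, M ∈ torsionOfSet.{u} X → ∀ S : Submodule R M,
      ModuleCat.of R S ∈ torsionOfSet.{u} X := by
  intro M hM S
  show Module.support R S ⊆ X
  rw [GP_support_subset_iff]
  intro s p hp
  refine (GP_memT_iff M).1 hM (s : M) ((mem_zeroLocus _ _).2 ?_)
  intro r hr
  have h2 : r • (s : M) = 0 := GP_mem_annOf.1 hr
  have h1 : r • s = 0 := by
    apply ZeroMemClass.coe_eq_zero.1
    rw [Submodule.coe_smul]; exact h2
  exact (mem_zeroLocus _ _).1 hp (GP_mem_annOf.2 h1)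

lemma GP_part1_thomasonOf (X : Set (PrimeSpectrum R)) (hX : IsThomason X) :
    thomasonOf (torsionOfSet.{u} X) = X := by
  obtain ⟨𝓘, hfg, rfl⟩ := hX
  apply subset_antisymm
  · refine Set.iUnion₂_subset ?_
    intro I hI
    have key := (GP_memT_iff (ModuleCat.of R (R ⧸ I))).1 hI
    intro p hp
    refine key (Submodule.Quotient.mk 1) ((mem_zeroLocus _ _).2 ?_)
    intro r hr
    have hr0 : r • (Submodule.Quotient.mk 1 : R ⧸ I) = 0 := GP_mem_annOf.1 hr
    rw [← Submodule.Quotient.mk_smul, smul_eq_mul, mul_one, Submodule.Quotient.mk_eq_zero] at hr0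
    exact (mem_zeroLocus _ _).1 hp hr0
  · intro p hp
    rw [Set.mem_iUnion₂] at hp
    obtain ⟨I, hI, hpI⟩ := hp
    refine Set.mem_iUnion₂.2 ⟨I, ?_, hpI⟩
    rw [Set.mem_setOf_eq, GP_memT_iff]
    intro m
    obtain ⟨r, rfl⟩ := Submodule.Quotient.mk_surjective _ m
    have hle : I ≤ (Submodule.span R {(Submodule.Quotient.mk r : R ⧸ I)}).annihilator := by
      intro s hs
      rw [GP_mem_annOf, ← Submodule.Quotient.mk_smul, smul_eq_mul, Submodule.Quotient.mk_eq_zero]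
      exact Ideal.mul_mem_right r I hs
    refine subset_trans (zeroLocus_anti_mono (SetLike.coe_subset_coe.2 hle)) ?_
    exact Set.subset_iUnion₂ (s := fun I (_ : I ∈ 𝓘) => zeroLocus (I : Set R)) I hI

section Colimits
variable {ι : Type u} [Preorder ι] [IsDirected ι (· ≤ ·)] [Nonempty ι]
  {D : ι ⥤ ModuleCat.{u} R} {c : Cocone D}

lemma GP_exists_rep (hc : IsColimit c) (x : c.pt) :
    ∃ (i : ι) (y : D.obj i), c.ι.app i y = x := by
  obtain ⟨i, y, h⟩ := Types.jointly_surjective (D ⋙ forget _)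
    (isColimitOfPreserves (forget (ModuleCat.{u} R)) hc) x
  exact ⟨i, y, h⟩

lemma GP_eventually_zero (hc : IsColimit c) (i : ι) (y : D.obj i)
    (h : c.ι.app i y = 0) :
    ∃ (j : ι) (hij : i ≤ j), D.map (homOfLE hij) y = 0 := by
  have heq : ((forget (ModuleCat.{u} R)).mapCocone c).ι.app i y
      = ((forget (ModuleCat.{u} R)).mapCocone c).ι.app i (0 : D.obj i) := by
    show c.ι.app i y = c.ι.app i (0 : D.obj i)
    rw [h, map_zero]
  obtain ⟨k, f, g, hk⟩ := (Types.FilteredColimit.isColimit_eq_iff (D ⋙ forget _)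
    (isColimitOfPreserves (forget (ModuleCat.{u} R)) hc)).1 heq
  refine ⟨k, leOfHom f, ?_⟩
  have h2 : D.map (homOfLE (leOfHom f)) = D.map f := by
    rw [Subsingleton.elim (homOfLE (leOfHom f)) f]
  rw [h2]
  have hk' : D.map f y = D.map g (0 : D.obj i) := hk
  rw [hk', map_zero]

lemma GP_eventually_zero_finset (hc : IsColimit c) (s : Finset R) (i : ι) (y : D.obj i)
    (h : ∀ a ∈ s, c.ι.app i (a • y) = 0) :
    ∃ (j : ι) (hij : i ≤ j), ∀ a ∈ s, a • (D.map (homOfLE hij) y) = 0 := by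
  classical
  induction s using Finset.induction_on with
  | empty => exact ⟨i, le_rfl, fun a ha => absurd ha (Finset.notMem_empty a)⟩
  | @insert a s' ha ih =>
      obtain ⟨j, hij, hj⟩ := ih (fun b hb => h b (Finset.mem_insert_of_mem hb))
      have hpush : c.ι.app j (a • D.map (homOfLE hij) y) = 0 := by
        rw [← map_smul]
        have hw := c.w (homOfLE hij)
        have : c.ι.app j (D.map (homOfLE hij) (a • y)) = c.ι.app i (a • y) := by
          rw [← hw]; rfl
        rw [this]
        exact h a (Finset.mem_insert_self a s')
      obtain ⟨k, hjk, hk⟩ := GP_eventually_zero hc j _ hpush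
      refine ⟨k, le_trans hij hjk, ?_⟩
      intro b hb
      have hcomp : D.map (homOfLE (le_trans hij hjk)) y
          = D.map (homOfLE hjk) (D.map (homOfLE hij) y) := by
        have : homOfLE (le_trans hij hjk) = homOfLE hij ≫ homOfLE hjk :=
          Subsingleton.elim _ _
        rw [this, Functor.map_comp]
        rfl
      rcases Finset.mem_insert.1 hb with rfl | hb'
      · rw [hcomp, ← map_smul]
        exact hk
      · rw [hcomp, ← map_smul]
        have : b • D.map (homOfLE hij) y = 0 := hj b hb'
        rw [this, map_zero]

end Colimits

lemma GP_part1_dirlim (X : Set (PrimeSpectrum R)) (hX : IsThomason X) :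
    ∀ (ι : Type u) [Preorder ι] [IsDirected ι (· ≤ ·)] [Nonempty ι]
      (D : ι ⥤ ModuleCat.{u} R) (c : Cocone D), IsColimit c →
      (∀ i, D.obj i ∈ freeOf (torsionOfSet.{u} X)) → c.pt ∈ freeOf (torsionOfSet.{u} X) := by
  obtain ⟨𝓘, hfg, rfl⟩ := hX
  intro ι _ _ _ D c hc hobj
  rw [GP_memF_iff]
  intro n hn
  obtain ⟨L, hL, hLrad⟩ := GP_zorn _ 𝓘 hfg hn
  obtain ⟨k, hk⟩ := Ideal.exists_pow_le_of_le_radical_of_fg hLrad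
    (GP_listProd_fg (fun I hI => hfg I (hL I hI)))
  obtain ⟨s, hs⟩ := Submodule.FG.pow (GP_listProd_fg (fun I hI => hfg I (hL I hI))) k
  obtain ⟨i, y, rfl⟩ := GP_exists_rep hc n
  have hann : ∀ a ∈ s, c.ι.app i (a • y) = 0 := by
    intro a has
    rw [map_smul]
    have haI : a ∈ (Submodule.span R {c.ι.app i y}).annihilator := by
      apply hk
      rw [← hs]
      exact Submodule.subset_span has
    exact GP_mem_annOf.1 haI
  obtain ⟨j, hij, hj⟩ := GP_eventually_zero_finset hc s i y hann
  set y' := D.map (homOfLE hij) y with hy'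
  have hy'0 : y' = 0 := by
    refine (GP_memF_iff (D.obj j)).1 (hobj j) y' ?_
    have hle : L.prod ^ k ≤ (Submodule.span R {y'}).annihilator := by
      rw [← hs, Submodule.span_le]
      intro a has
      exact GP_mem_annOf.2 (hj a has)
    refine subset_trans (zeroLocus_anti_mono (SetLike.coe_subset_coe.2 hle)) ?_
    intro p hp
    have hp' : L.prod ≤ p.asIdeal := by
      rcases Nat.eq_zero_or_pos k with rfl | hkpos
      · exfalso
        have h1 : (1 : R) ∈ p.asIdeal := by
          apply (mem_zeroLocus _ _).1 hp
          simp [Ideal.one_eq_top]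
        exact p.isPrime.ne_top ((Ideal.eq_top_iff_one _).2 h1)
      · haveI := p.isPrime
        exact (Ideal.IsPrime.pow_le_iff (Nat.pos_iff_ne_zero.1 hkpos)).1
          (fun x hx => (mem_zeroLocus _ _).1 hp hx)
    have hex : ∃ I ∈ L, I ≤ p.asIdeal := by
      have h2 := (Ideal.IsPrime.multiset_prod_le (s := (L : Multiset (Ideal R))) p.isPrime).1 ?_
      · simpa using h2
      · simpa using hp'
    obtain ⟨I, hIL, hIp⟩ := hex
    exact Set.mem_iUnion₂.2 ⟨I, hL I hIL, (mem_zeroLocus _ _).2 hIp⟩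
  have hw := c.w (homOfLE hij)
  have hmove : c.ι.app i y = c.ι.app j y' := by rw [← hw]; rfl
  rw [hmove, hy'0, map_zero]

section Part2
variable {T F : Set (ModuleCat.{u} R)}

/-- View a `ModuleCat` morphism as a linear map. -/
def GP_toLin {M N : ModuleCat.{u} R} (f : M ⟶ N) : ↥M →ₗ[R] ↥N := f.hom

/-- View a linear map as a `ModuleCat` morphism. -/
def GP_ofLin {M N : ModuleCat.{u} R} (f : ↥M →ₗ[R] ↥N) : M ⟶ N := ModuleCat.ofHom f

lemma GP_mem_of_equiv (htp : IsTorsionPair T F) {M N : ModuleCat.{u} R}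
    (e : ↥M ≃ₗ[R] ↥N) (hM : M ∈ T) : N ∈ T := by
  rw [htp.mem_torsion_iff]
  intro K hK f
  have h0 : ((GP_toLin f).comp e.toLinearMap : ↥M →ₗ[R] ↥K) = 0 :=
    congrArg ModuleCat.Hom.hom <| (htp.mem_torsion_iff M).1 hM K hK (GP_ofLin ((GP_toLin f).comp e.toLinearMap))
  apply ModuleCat.hom_ext
  apply LinearMap.ext
  intro n
  have h1 := LinearMap.congr_fun h0 (e.symm n)
  simp only [LinearMap.comp_apply, LinearMap.zero_apply, LinearEquiv.coe_toLinearMap,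
    LinearEquiv.apply_symm_apply] at h1
  exact h1

lemma GP_quot_mem (htp : IsTorsionPair T F) {M : ModuleCat.{u} R} (hM : M ∈ T)
    (K : Submodule R M) : ModuleCat.of R (↥M ⧸ K) ∈ T := by
  rw [htp.mem_torsion_iff]
  intro N hN f
  have h0 : ((GP_toLin f).comp K.mkQ : ↥M →ₗ[R] ↥N) = 0 :=
    congrArg ModuleCat.Hom.hom <| (htp.mem_torsion_iff M).1 hM N hN (GP_ofLin ((GP_toLin f).comp K.mkQ))
  apply ModuleCat.hom_ext
  apply LinearMap.ext
  intro x
  obtain ⟨m, rfl⟩ := Submodule.Quotient.mk_surjective _ x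
  exact LinearMap.congr_fun h0 m

lemma GP_surj_mem (htp : IsTorsionPair T F) {M N : ModuleCat.{u} R} (hM : M ∈ T)
    (g : ↥M →ₗ[R] ↥N) (hg : Function.Surjective g) : N ∈ T :=
  GP_mem_of_equiv htp (g.quotKerEquivOfSurjective hg) (GP_quot_mem htp hM (LinearMap.ker g))

lemma GP_range_mem (htp : IsTorsionPair T F) {M N : ModuleCat.{u} R} (hM : M ∈ T)
    (g : ↥M →ₗ[R] ↥N) : ModuleCat.of R ↥(LinearMap.range g) ∈ T :=
  GP_surj_mem htp hM g.rangeRestrict (LinearMap.surjective_rangeRestrict g)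

lemma GP_map_mem (htp : IsTorsionPair T F) {M N : ModuleCat.{u} R} {S : Submodule R M}
    (hS : ModuleCat.of R ↥S ∈ T) (g : ↥M →ₗ[R] ↥N) :
    ModuleCat.of R ↥(S.map g) ∈ T := by
  have h1 := GP_range_mem (M := ModuleCat.of R ↥S) (N := N) htp hS (g.comp S.subtype)
  have heq : LinearMap.range (g.comp S.subtype) = S.map g := by
    rw [LinearMap.range_comp, Submodule.range_subtype]
  rw [heq] at h1
  exact h1

/-- The torsion submodule relative to a torsion class. -/
def GP_torSub (T : Set (ModuleCat.{u} R)) (M : ModuleCat.{u} R) : Submodule R M :=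
  sSup {S : Submodule R M | ModuleCat.of R ↥S ∈ T}

lemma GP_torSub_mem (htp : IsTorsionPair T F) (M : ModuleCat.{u} R) :
    ModuleCat.of R ↥(GP_torSub T M) ∈ T := by
  have hrw : GP_torSub T M
      = ⨆ S : {S : Submodule R M // ModuleCat.of R ↥S ∈ T}, (S : Submodule R M) :=
    sSup_eq_iSup' _
  rw [hrw, htp.mem_torsion_iff]
  intro N hN f
  apply ModuleCat.hom_ext
  apply LinearMap.ext
  rintro ⟨x, hx⟩
  rw [ModuleCat.hom_zero, LinearMap.zero_apply]
  refine Submodule.iSup_induction' (motive := fun x hx => GP_toLin f ⟨x, hx⟩ = 0) _ ?_ ?_ ?_ hx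
  · rintro ⟨S, hS⟩ x hxS
    have hle : (S : Submodule R M)
        ≤ ⨆ S : {S : Submodule R M // ModuleCat.of R ↥S ∈ T}, (S : Submodule R M) :=
      le_iSup (fun S : {S : Submodule R M // ModuleCat.of R ↥S ∈ T} => (S : Submodule R M))
        ⟨S, hS⟩
    have h0 : ((GP_toLin f).comp (Submodule.inclusion hle) : ↥S →ₗ[R] ↥N) = 0 :=
      congrArg ModuleCat.Hom.hom <| (htp.mem_torsion_iff (ModuleCat.of R ↥S)).1 hS N hN
        (GP_ofLin ((GP_toLin f).comp (Submodule.inclusion hle)))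
    exact LinearMap.congr_fun h0 ⟨x, hxS⟩
  · exact map_zero (GP_toLin f)
  · intro x y hx hy hfx hfy
    have hsum : (⟨x + y, add_mem hx hy⟩ : ↥(⨆ S : {S : Submodule R M // ModuleCat.of R ↥S ∈ T},
        (S : Submodule R M))) = ⟨x, hx⟩ + ⟨y, hy⟩ := rfl
    rw [hsum, map_add, hfx, hfy, add_zero]

lemma GP_torSub_eq_top (htp : IsTorsionPair T F) {M : ModuleCat.{u} R} (hM : M ∈ T) :
    GP_torSub T M = ⊤ :=
  eq_top_iff.2 (le_sSup (GP_mem_of_equiv htp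
    (Submodule.topEquiv (R := R) (M := ↥M)).symm hM))

lemma GP_mem_of_torSub_top (htp : IsTorsionPair T F) {M : ModuleCat.{u} R}
    (h : GP_torSub T M = ⊤) : M ∈ T := by
  have h1 := GP_torSub_mem htp M
  rw [h] at h1
  exact GP_mem_of_equiv htp (Submodule.topEquiv (R := R) (M := ↥M)) h1

lemma GP_ext_closed (htp : IsTorsionPair T F) {M : ModuleCat.{u} R} (K : Submodule R M)
    (hK : ModuleCat.of R ↥K ∈ T) (hQ : ModuleCat.of R (↥M ⧸ K) ∈ T) : M ∈ T := by
  rw [htp.mem_torsion_iff]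
  intro N hN f
  have h1 : ((GP_toLin f).comp K.subtype : ↥K →ₗ[R] ↥N) = 0 :=
    congrArg ModuleCat.Hom.hom <| (htp.mem_torsion_iff _).1 hK N hN (GP_ofLin ((GP_toLin f).comp K.subtype))
  have hker : K ≤ LinearMap.ker (GP_toLin f) := by
    intro x hx
    exact LinearMap.mem_ker.2 (LinearMap.congr_fun h1 ⟨x, hx⟩)
  have h2 : (K.liftQ (GP_toLin f) hker : (↥M ⧸ K) →ₗ[R] ↥N) = 0 :=
    congrArg ModuleCat.Hom.hom <| (htp.mem_torsion_iff _).1 hQ N hN (GP_ofLin (K.liftQ (GP_toLin f) hker))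
  apply ModuleCat.hom_ext
  apply LinearMap.ext
  intro m
  have h3 : GP_toLin f m = K.liftQ (GP_toLin f) hker (Submodule.Quotient.mk m) :=
    (Submodule.liftQ_apply _ _ _).symm
  rw [ModuleCat.hom_zero, LinearMap.zero_apply]
  calc GP_toLin f m = K.liftQ (GP_toLin f) hker (Submodule.Quotient.mk m) := h3
    _ = 0 := LinearMap.congr_fun h2 _
end Part2

section Part2b
variable {T F : Set (ModuleCat.{u} R)}

lemma GP_quot_tor_bot (htp : IsTorsionPair T F) (M : ModuleCat.{u} R)
    (S' : Submodule R (↥M ⧸ GP_torSub T M))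
    (hS' : ModuleCat.of R ↥S' ∈ T) : S' = ⊥ := by
  set P := S'.comap (GP_torSub T M).mkQ with hP
  have htP : GP_torSub T M ≤ P := by
    intro x hx
    show (GP_torSub T M).mkQ x ∈ S'
    have hx0 : (GP_torSub T M).mkQ x = 0 := (Submodule.Quotient.mk_eq_zero _).2 hx
    rw [hx0]
    exact S'.zero_mem
  set φ : ↥P →ₗ[R] ↥S' :=
    ((GP_torSub T M).mkQ.comp P.subtype).codRestrict S' (fun x => x.2) with hφ
  have hφs : Function.Surjective φ := by
    rintro ⟨y, hy⟩
    obtain ⟨x, rfl⟩ := Submodule.Quotient.mk_surjective (GP_torSub T M) y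
    exact ⟨⟨x, hy⟩, Subtype.ext rfl⟩
  have hPmem : ModuleCat.of R ↥P ∈ T := by
    refine GP_ext_closed htp (LinearMap.ker φ) ?_ ?_
    · have hker : LinearMap.ker φ = Submodule.comap P.subtype (GP_torSub T M) := by
        ext x
        simp only [hφ, LinearMap.mem_ker, Submodule.mem_comap]
        constructor
        · intro h
          have h2 : (GP_torSub T M).mkQ (P.subtype x) = 0 := congrArg Subtype.val h
          rwa [← Submodule.Quotient.mk_eq_zero (GP_torSub T M)]
        · intro h
          apply Subtype.ext
          show (GP_torSub T M).mkQ (P.subtype x) = 0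
          exact (Submodule.Quotient.mk_eq_zero _).2 h
      rw [hker]
      exact GP_mem_of_equiv htp (Submodule.comapSubtypeEquivOfLe htP).symm
        (GP_torSub_mem htp M)
    · exact GP_mem_of_equiv htp
        (show ↥(ModuleCat.of R ↥S') ≃ₗ[R]
            ↥(ModuleCat.of R (↥(ModuleCat.of R ↥P) ⧸ LinearMap.ker φ)) from
          (φ.quotKerEquivOfSurjective hφs).symm) hS'
  have hPle : P ≤ GP_torSub T M := le_sSup hPmem
  have hS'eq : Submodule.map (GP_torSub T M).mkQ P = S' :=
    Submodule.map_comap_eq_of_surjective (Submodule.mkQ_surjective _) S'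
  rw [← hS'eq]
  apply (Submodule.eq_bot_iff _).2
  rintro y ⟨x, hxP, rfl⟩
  exact (Submodule.Quotient.mk_eq_zero _).2 (hPle hxP)

lemma GP_quot_tor_memF (htp : IsTorsionPair T F) (M : ModuleCat.{u} R) :
    ModuleCat.of R (↥M ⧸ GP_torSub T M) ∈ F := by
  rw [htp.mem_torsionFree_iff]
  intro K hK f
  have hr := GP_range_mem htp hK (GP_toLin f)
  have hb := GP_quot_tor_bot htp M (LinearMap.range (GP_toLin f)) hr
  exact ModuleCat.hom_ext (LinearMap.range_eq_bot.1 hb)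

lemma GP_upward (htp : IsTorsionPair T F) {I J : Ideal R} (hIJ : I ≤ J)
    (hI : ModuleCat.of R (R ⧸ I) ∈ T) : ModuleCat.of R (R ⧸ J) ∈ T := by
  have h' : I ≤ Submodule.comap (LinearMap.id (R := R) (M := R)) J := fun x hx => hIJ hx
  refine GP_surj_mem htp hI (Submodule.mapQ I J LinearMap.id h') ?_
  intro x
  obtain ⟨r, rfl⟩ := Submodule.Quotient.mk_surjective _ x
  refine ⟨Submodule.Quotient.mk r, ?_⟩
  show Submodule.mapQ I J LinearMap.id h' (Submodule.Quotient.mk r) = Submodule.Quotient.mk r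
  rw [Submodule.mapQ_apply]
  rfl

lemma GP_mul (htp : IsTorsionPair T F) {I J : Ideal R}
    (hI : ModuleCat.of R (R ⧸ I) ∈ T) (hJ : ModuleCat.of R (R ⧸ J) ∈ T) :
    ModuleCat.of R (R ⧸ (I * J)) ∈ T := by
  rw [htp.mem_torsion_iff]
  intro N hN f
  set g : R →ₗ[R] ↥N := (GP_toLin f).comp (I * J : Ideal R).mkQ with hg
  have hg0 : ∀ x ∈ I * J, g x = 0 := by
    intro x hx
    show GP_toLin f ((I * J : Ideal R).mkQ x) = 0
    have h0 : (I * J : Ideal R).mkQ x = 0 := (Submodule.Quotient.mk_eq_zero _).2 hx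
    rw [h0, map_zero]
  have hIker : I ≤ LinearMap.ker g := by
    intro r hr
    have hcond : J ≤ LinearMap.ker (g.comp (LinearMap.toSpanSingleton R R r)) := by
      intro s hs
      rw [LinearMap.mem_ker, LinearMap.comp_apply, LinearMap.toSpanSingleton_apply,
        smul_eq_mul]
      exact hg0 _ (mul_comm r s ▸ Ideal.mul_mem_mul hr hs)
    have h0 : (Submodule.liftQ J (g.comp (LinearMap.toSpanSingleton R R r)) hcond
        : (R ⧸ J) →ₗ[R] ↥N) = 0 :=
      congrArg ModuleCat.Hom.hom <| (htp.mem_torsion_iff _).1 hJ N hN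
        (GP_ofLin (Submodule.liftQ J (g.comp (LinearMap.toSpanSingleton R R r)) hcond))
    have h1 := LinearMap.congr_fun h0 (Submodule.Quotient.mk 1)
    rw [Submodule.liftQ_apply, LinearMap.comp_apply, LinearMap.toSpanSingleton_apply,
      one_smul] at h1
    exact LinearMap.mem_ker.2 h1
  have h2 : (Submodule.liftQ I g hIker : (R ⧸ I) →ₗ[R] ↥N) = 0 :=
    congrArg ModuleCat.Hom.hom <| (htp.mem_torsion_iff _).1 hI N hN (GP_ofLin (Submodule.liftQ I g hIker))
  apply ModuleCat.hom_ext
  apply LinearMap.ext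
  intro x
  obtain ⟨r, rfl⟩ := Submodule.Quotient.mk_surjective _ x
  have h3 := LinearMap.congr_fun h2 (Submodule.Quotient.mk r)
  rw [Submodule.liftQ_apply] at h3
  exact h3

end Part2b

section FiniteType
variable {T F : Set (ModuleCat.{u} R)}

/-- Directed index type: finitely generated subideals of `I`. -/
abbrev GP_Lam (I : Ideal R) : Type u := {J : Ideal R // J.FG ∧ J ≤ I}

instance (I : Ideal R) : IsDirected (GP_Lam I) (· ≤ ·) := ⟨fun a b =>
  ⟨⟨a.1 ⊔ b.1, ⟨Submodule.FG.sup a.2.1 b.2.1, sup_le a.2.2 b.2.2⟩⟩,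
    Subtype.coe_le_coe.1 le_sup_left, Subtype.coe_le_coe.1 le_sup_right⟩⟩

instance (I : Ideal R) : Nonempty (GP_Lam I) := ⟨⟨⊥, Submodule.fg_bot, bot_le⟩⟩

/-- Object part of the diagram: `(R/J)/t(R/J)`. -/
def GP_Dobj (T : Set (ModuleCat.{u} R)) (J : Ideal R) : ModuleCat.{u} R :=
  ModuleCat.of R
    (↥(ModuleCat.of R (R ⧸ J)) ⧸ GP_torSub T (ModuleCat.of R (R ⧸ J)))

lemma GP_torSub_map_le (htp : IsTorsionPair T F) {M N : ModuleCat.{u} R}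
    (g : ↥M →ₗ[R] ↥N) : GP_torSub T M ≤ (GP_torSub T N).comap g := by
  rw [GP_torSub, sSup_le_iff]
  intro S hS
  rw [← Submodule.map_le_iff_le_comap]
  exact le_sSup (GP_map_mem htp hS g)

/-- The base map `R/J → R/J'`. -/
def GP_b {J J' : Ideal R} (h : J ≤ J') :
    ↥(ModuleCat.of R (R ⧸ J)) →ₗ[R] ↥(ModuleCat.of R (R ⧸ J')) :=
  Submodule.mapQ J J' LinearMap.id (fun x hx => h hx)

/-- The map in the diagram. -/
def GP_Dmap (htp : IsTorsionPair T F) {J J' : Ideal R} (h : J ≤ J') :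
    GP_Dobj T J ⟶ GP_Dobj T J' :=
  GP_ofLin (Submodule.mapQ _ _ (GP_b h) (GP_torSub_map_le htp (GP_b h)))

lemma GP_Dmap_apply (htp : IsTorsionPair T F) {J J' : Ideal R} (h : J ≤ J') (r : R) :
    GP_toLin (GP_Dmap htp h)
        (Submodule.Quotient.mk (Submodule.Quotient.mk r)) =
      Submodule.Quotient.mk (Submodule.Quotient.mk r) := by
  show Submodule.mapQ _ _ (GP_b h) (GP_torSub_map_le htp (GP_b h))
      (Submodule.Quotient.mk (Submodule.Quotient.mk r)) = _
  rw [Submodule.mapQ_apply]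
  show Submodule.Quotient.mk
      (Submodule.mapQ J J' LinearMap.id (fun x hx => h hx) (Submodule.Quotient.mk r)) = _
  rw [Submodule.mapQ_apply]
  rfl

/-- The diagram of `(R/J)/t(R/J)` over f.g. subideals of `I`. -/
def GP_D (htp : IsTorsionPair T F) (I : Ideal R) : GP_Lam I ⥤ ModuleCat.{u} R where
  obj J := GP_Dobj T J.1
  map {J J'} h := GP_Dmap htp (leOfHom h)
  map_id J := by
    apply ModuleCat.hom_ext
    apply LinearMap.ext
    intro x
    obtain ⟨y, rfl⟩ := Submodule.Quotient.mk_surjective _ x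
    obtain ⟨r, rfl⟩ := Submodule.Quotient.mk_surjective _ y
    exact GP_Dmap_apply htp _ r
  map_comp {a b d} f g := by
    apply ModuleCat.hom_ext
    apply LinearMap.ext
    intro x
    obtain ⟨y, rfl⟩ := Submodule.Quotient.mk_surjective _ x
    obtain ⟨r, rfl⟩ := Submodule.Quotient.mk_surjective _ y
    show GP_toLin (GP_Dmap htp (leOfHom (f ≫ g)))
          (Submodule.Quotient.mk (Submodule.Quotient.mk r))
        = GP_toLin (GP_Dmap htp (leOfHom g)) (GP_toLin (GP_Dmap htp (leOfHom f))
          (Submodule.Quotient.mk (Submodule.Quotient.mk r)))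
    rw [GP_Dmap_apply, GP_Dmap_apply, GP_Dmap_apply]

/-- The canonical map `R → (R/J)/t(R/J)`. -/
def GP_p (T : Set (ModuleCat.{u} R)) (J : Ideal R) : R →ₗ[R] ↥(GP_Dobj T J) :=
  (GP_torSub T (ModuleCat.of R (R ⧸ J))).mkQ.comp (J : Submodule R R).mkQ

lemma GP_p_apply (J : Ideal R) (r : R) :
    GP_p T J r = Submodule.Quotient.mk (Submodule.Quotient.mk r) := rfl

lemma GP_finite_type (htp : IsTorsionPair T F) (hdc : ClosedUnderDirectedColimits F)
    {I : Ideal R} (hI : ModuleCat.of R (R ⧸ I) ∈ T) :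
    ∃ J : Ideal R, J.FG ∧ J ≤ I ∧ ModuleCat.of R (R ⧸ J) ∈ T := by
  set D := GP_D htp I with hD
  set c := Limits.colimit.cocone D with hcdef
  have hc : IsColimit c := Limits.colimit.isColimit D
  have hCF : c.pt ∈ F := hdc (GP_Lam I) D c hc (fun J => GP_quot_tor_memF htp _)
  set bot : GP_Lam I := ⟨⊥, Submodule.fg_bot, bot_le⟩ with hbot
  set ψ : R →ₗ[R] ↥(c.pt) := (GP_toLin (c.ι.app bot)).comp (GP_p T ⊥) with hψ
  have hker : I ≤ LinearMap.ker ψ := by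
    intro r hr
    have hJr : (Ideal.span {r}).FG ∧ Ideal.span {r} ≤ I :=
      ⟨⟨{r}, by simp⟩, by rwa [Ideal.span_le, Set.singleton_subset_iff]⟩
    set Jr : GP_Lam I := ⟨Ideal.span {r}, hJr⟩ with hJrdef
    have hbJr : bot ≤ Jr := Subtype.mk_le_mk.2 bot_le
    have hw := c.w (homOfLE hbJr)
    rw [LinearMap.mem_ker]
    show GP_toLin (c.ι.app bot) (GP_p T ⊥ r) = 0
    rw [← hw]
    show GP_toLin (c.ι.app Jr) (GP_toLin (D.map (homOfLE hbJr)) (GP_p T ⊥ r)) = 0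
    have hstep : GP_toLin (D.map (homOfLE hbJr)) (GP_p T ⊥ r)
        = GP_p T (Ideal.span {r}) r := GP_Dmap_apply htp _ r
    rw [hstep]
    have hz : GP_p T (Ideal.span {r}) r = 0 := by
      rw [GP_p_apply]
      have h1 : (Submodule.Quotient.mk r : R ⧸ Ideal.span {r}) = 0 :=
        (Submodule.Quotient.mk_eq_zero _).2 (Ideal.mem_span_singleton_self r)
      rw [h1]
      exact (Submodule.Quotient.mk_eq_zero _).2 (Submodule.zero_mem _)
    rw [hz]; exact map_zero (GP_toLin (c.ι.app Jr))
  have h0 : (Submodule.liftQ I ψ hker : (R ⧸ I) →ₗ[R] ↥(c.pt)) = 0 :=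
    congrArg ModuleCat.Hom.hom <| (htp.mem_torsionFree_iff c.pt).1 hCF (ModuleCat.of R (R ⧸ I)) hI
      (GP_ofLin (Submodule.liftQ I ψ hker))
  have hψ1 : c.ι.app bot (GP_p T ⊥ 1) = 0 := by
    have h1 := LinearMap.congr_fun h0 (Submodule.Quotient.mk 1)
    rw [Submodule.liftQ_apply] at h1
    exact h1
  obtain ⟨J, hbJ, hJ0⟩ := GP_eventually_zero hc bot (GP_p T ⊥ 1) hψ1
  have hJ0' : GP_p T J.1 1 = 0 := by
    have := GP_Dmap_apply htp (show (⊥ : Ideal R) ≤ J.1 from bot_le) 1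
    rw [← GP_p_apply, ← GP_p_apply] at this
    exact this.symm.trans hJ0
  have hmem1 : (Submodule.Quotient.mk 1 : R ⧸ J.1)
      ∈ GP_torSub T (ModuleCat.of R (R ⧸ J.1)) := by
    rw [← Submodule.Quotient.mk_eq_zero]
    exact hJ0'
  have htop : GP_torSub T (ModuleCat.of R (R ⧸ J.1)) = ⊤ := by
    rw [eq_top_iff]
    intro x _
    obtain ⟨r, rfl⟩ := Submodule.Quotient.mk_surjective _ x
    have hx : (Submodule.Quotient.mk r : R ⧸ J.1)
        = r • (Submodule.Quotient.mk 1 : R ⧸ J.1) := by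
      rw [← Submodule.Quotient.mk_smul, smul_eq_mul, mul_one]
    rw [hx]
    exact Submodule.smul_mem _ r hmem1
  exact ⟨J.1, J.2.1, J.2.2, GP_mem_of_torSub_top htp htop⟩

end FiniteType

section Part2c
variable {T F : Set (ModuleCat.{u} R)}

lemma GP_torsionOf_eq (M : ModuleCat.{u} R) (m : M) :
    Ideal.torsionOf R M m = (Submodule.span R {m}).annihilator := by
  ext r
  rw [Ideal.mem_torsionOf_iff, GP_mem_annOf]

lemma GP_ann_quot_mem (htp : IsTorsionPair T F) (hher : HereditaryClass T)
    {M : ModuleCat.{u} R} (hM : M ∈ T) (m : M) :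
    ModuleCat.of R (R ⧸ (Submodule.span R {m}).annihilator) ∈ T := by
  have hspan := hher M hM (Submodule.span R {m})
  have h1 := GP_mem_of_equiv (N := ModuleCat.of R (R ⧸ Ideal.torsionOf R M m)) htp
    (Ideal.quotTorsionOfEquivSpanSingleton R M m).symm hspan
  rwa [GP_torsionOf_eq] at h1

lemma GP_T_sub (htp : IsTorsionPair T F) (hher : HereditaryClass T) :
    T ⊆ torsionOfSet.{u} (thomasonOf T) := by
  intro M hM
  rw [GP_memT_iff]
  intro m p hp
  exact Set.mem_iUnion₂.2
    ⟨(Submodule.span R {m}).annihilator, GP_ann_quot_mem htp hher hM m, hp⟩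

lemma GP_thomason_eq (htp : IsTorsionPair T F) (hdc : ClosedUnderDirectedColimits F) :
    thomasonOf T
      = ⋃ I ∈ {I : Ideal R | I.FG ∧ ModuleCat.of R (R ⧸ I) ∈ T},
          zeroLocus (I : Set R) := by
  apply subset_antisymm
  · refine Set.iUnion₂_subset ?_
    intro I hI p hp
    obtain ⟨J, hfg, hJI, hJT⟩ := GP_finite_type htp hdc hI
    refine Set.mem_iUnion₂.2 ⟨J, ⟨hfg, hJT⟩, (mem_zeroLocus _ _).2 ?_⟩
    exact le_trans hJI ((mem_zeroLocus _ _).1 hp)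
  · refine Set.iUnion₂_subset ?_
    intro I hI
    intro p hp
    exact Set.mem_iUnion₂.2 ⟨I, hI.2, hp⟩

lemma GP_top_mem (htp : IsTorsionPair T F) :
    ModuleCat.of R (R ⧸ (⊤ : Ideal R)) ∈ T := by
  rw [htp.mem_torsion_iff]
  intro N hN f
  apply ModuleCat.hom_ext
  apply LinearMap.ext
  intro x
  have hx : x = 0 := by
    obtain ⟨r, rfl⟩ := Submodule.Quotient.mk_surjective _ x
    rw [Submodule.Quotient.mk_eq_zero]
    exact Submodule.mem_top
  rw [hx, map_zero, ModuleCat.hom_zero, LinearMap.zero_apply]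

lemma GP_list_prod_mem (htp : IsTorsionPair T F) {L : List (Ideal R)}
    (hL : ∀ I ∈ L, ModuleCat.of R (R ⧸ I) ∈ T) :
    ModuleCat.of R (R ⧸ L.prod) ∈ T := by
  induction L with
  | nil =>
      rw [List.prod_nil, Ideal.one_eq_top]
      exact GP_top_mem htp
  | cons I L ih =>
      rw [List.prod_cons]
      exact GP_mul htp (hL I (List.mem_cons_self))
        (ih (fun J hJ => hL J (List.mem_cons_of_mem _ hJ)))

lemma GP_pow_mem (htp : IsTorsionPair T F) {I : Ideal R}
    (hI : ModuleCat.of R (R ⧸ I) ∈ T) (k : ℕ) :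
    ModuleCat.of R (R ⧸ I ^ k) ∈ T := by
  induction k with
  | zero =>
      rw [pow_zero, Ideal.one_eq_top]
      exact GP_top_mem htp
  | succ n ih =>
      rw [pow_succ]
      exact GP_mul htp ih hI

lemma GP_torsionOfSet_sub (htp : IsTorsionPair T F) (hdc : ClosedUnderDirectedColimits F) :
    torsionOfSet.{u} (thomasonOf T) ⊆ T := by
  intro M hM
  have hcyc : ∀ m : M, ModuleCat.of R ↥(Submodule.span R {m}) ∈ T := by
    intro m
    have hVsub : zeroLocus ((Submodule.span R {m}).annihilator : Set R) ⊆ thomasonOf T :=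
      (GP_memT_iff M).1 hM m
    rw [GP_thomason_eq htp hdc] at hVsub
    obtain ⟨L, hL, hrad⟩ := GP_zorn _ _ (fun I hI => hI.1) hVsub
    obtain ⟨k, hk⟩ := Ideal.exists_pow_le_of_le_radical_of_fg hrad
      (GP_listProd_fg (fun I hI => (hL I hI).1))
    have hprodT : ModuleCat.of R (R ⧸ L.prod) ∈ T :=
      GP_list_prod_mem htp (fun I hI => (hL I hI).2)
    have hannT : ModuleCat.of R (R ⧸ (Submodule.span R {m}).annihilator) ∈ T :=
      GP_upward htp hk (GP_pow_mem htp hprodT k)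
    refine GP_mem_of_equiv (M := ModuleCat.of R (R ⧸ Ideal.torsionOf R M m)) htp
      (Ideal.quotTorsionOfEquivSpanSingleton R M m) ?_
    rwa [GP_torsionOf_eq]
  rw [htp.mem_torsion_iff]
  intro N hN f
  apply ModuleCat.hom_ext
  apply LinearMap.ext
  intro m
  have h0 : ((GP_toLin f).comp (Submodule.span R {m}).subtype
      : ↥(Submodule.span R {m}) →ₗ[R] ↥N) = 0 :=
    congrArg ModuleCat.Hom.hom <| (htp.mem_torsion_iff _).1 (hcyc m) N hN
      (GP_ofLin ((GP_toLin f).comp (Submodule.span R {m}).subtype))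
  exact LinearMap.congr_fun h0 ⟨m, Submodule.mem_span_singleton_self m⟩

end Part2c

/-- Garkusha–Prest: `T ↦ ⋃{V(I) : R/I ∈ T}` and `X ↦ {M : Supp M ⊆ X}` are mutually
inverse bijections between hereditary torsion pairs of finite type in `Mod-R` and
Thomason subsets of `Spec R`. -/
theorem stmt7 :
    (∀ X : Set (PrimeSpectrum R), IsThomason X →
      IsTorsionPair (torsionOfSet.{u} X) (freeOf (torsionOfSet.{u} X)) ∧
      HereditaryClass (torsionOfSet.{u} X) ∧
      ClosedUnderDirectedColimits (freeOf (torsionOfSet.{u} X)) ∧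
      thomasonOf (torsionOfSet.{u} X) = X) ∧
    (∀ T F : Set (ModuleCat.{u} R), IsTorsionPair T F → HereditaryClass T →
      ClosedUnderDirectedColimits F →
      IsThomason (thomasonOf T) ∧ T = torsionOfSet.{u} (thomasonOf T)) := by
  constructor
  · intro X hX
    exact ⟨GP_part1_tp X, GP_part1_hered X, GP_part1_dirlim X hX, GP_part1_thomasonOf X hX⟩
  · intro T F htp hher hdc
    exact ⟨⟨{I : Ideal R | I.FG ∧ ModuleCat.of R (R ⧸ I) ∈ T}, fun I h => h.1,
      GP_thomason_eq htp hdc⟩,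
      subset_antisymm (GP_T_sub htp hher) (GP_torsionOfSet_sub htp hdc)⟩
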